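/- ⟨f̃_{0,1}, f̃_{1,1}⟩ = 0 if and only if r_1 = (4 − 4α_1² − 6α_2 − 2α_1α_2 + 3α_1²α_2 − 4α_2² + 3α_2³)/(4(−4 + α_1² − α_1α_2 + α_2²)), and ⟨f̃_{1,1}, f̃_{2,1}⟩ = 0 if and only if s_1 = (4 − 6α_1 − 4α_1² + 3α_1³ − 2α_1α_2 − 4α_2² + 3α_1α_2²)/(4(−4 + α_1² − α_1α_2 + α_2²)). -/

import Mathlib

open Set

/-- `f` is the self-affine FIF on `[0,1]` (partition `0, 1/2, 1`, hidden AFIF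
component identically zero) with parameters `α₁, α₂` through the data
`(0, w₀), (1/2, w₁), (1, w₂)`. -/
def IsSAFIF2 (α₁ α₂ : ℝ) (f : ℝ → ℝ) (w₀ w₁ w₂ : ℝ) : Prop :=
  ContinuousOn f (Icc (0 : ℝ) 1) ∧
  (∃ c₁ d₁ c₂ d₂ : ℝ, ∀ u ∈ Icc (0 : ℝ) 1,
    f (u / 2) = α₁ * f u + (c₁ * u + d₁) ∧
    f ((u + 1) / 2) = α₂ * f u + (c₂ * u + d₂)) ∧
  f 0 = w₀ ∧ f (1 / 2) = w₁ ∧ f 1 = w₂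

namespace SAFIFAux

lemma sub_left (h : ℝ → ℝ) :
    (∫ u in (0:ℝ)..1, h (u / 2)) = 2 * ∫ x in (0:ℝ)..(1/2 : ℝ), h x := by
  rw [intervalIntegral.integral_comp_div (c := (2:ℝ)) h two_ne_zero]
  norm_num

lemma sub_right (h : ℝ → ℝ) :
    (∫ u in (0:ℝ)..1, h ((u + 1) / 2)) = 2 * ∫ x in (1/2 : ℝ)..1, h x := by
  have h1 : (∫ u in (0:ℝ)..1, h ((u + 1) / 2))
      = ∫ v in (1:ℝ)..2, h (v / 2) := by
    simpa using intervalIntegral.integral_comp_add_right (a := (0:ℝ)) (b := 1)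
      (fun v => h (v / 2)) 1
  rw [h1, intervalIntegral.integral_comp_div (c := (2:ℝ)) h two_ne_zero]
  norm_num

lemma split2 (h : ℝ → ℝ) (hc : ContinuousOn h (Icc 0 1)) :
    2 * (∫ u in (0:ℝ)..1, h u)
      = (∫ u in (0:ℝ)..1, h (u / 2)) + ∫ u in (0:ℝ)..1, h ((u + 1) / 2) := by
  have h1 : IntervalIntegrable h MeasureTheory.volume 0 (1/2) := by
    apply ContinuousOn.intervalIntegrable
    apply hc.mono
    rw [uIcc_of_le (by norm_num : (0:ℝ) ≤ 1/2)]
    exact Icc_subset_Icc le_rfl (by norm_num)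
  have h2 : IntervalIntegrable h MeasureTheory.volume (1/2) 1 := by
    apply ContinuousOn.intervalIntegrable
    apply hc.mono
    rw [uIcc_of_le (by norm_num : (1:ℝ)/2 ≤ 1)]
    exact Icc_subset_Icc (by norm_num) le_rfl
  rw [sub_left, sub_right, ← intervalIntegral.integral_add_adjacent_intervals h1 h2]
  ring

lemma comb (f g : ℝ → ℝ) (hf : ContinuousOn f (Icc 0 1)) (hg : ContinuousOn g (Icc 0 1))
    (k1 k2 k3 k4 k5 k6 k7 k8 : ℝ) :
    (∫ u in (0:ℝ)..1, (k1 * (f u * g u) + k2 * (u * f u) + k3 * f u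
        + k4 * (u * g u) + k5 * g u + k6 * u ^ 2 + k7 * u + k8))
    = k1 * (∫ u in (0:ℝ)..1, f u * g u) + k2 * (∫ u in (0:ℝ)..1, u * f u)
      + k3 * (∫ u in (0:ℝ)..1, f u) + k4 * (∫ u in (0:ℝ)..1, u * g u)
      + k5 * (∫ u in (0:ℝ)..1, g u) + k6 / 3 + k7 / 2 + k8 := by
  have hu : uIcc (0:ℝ) 1 = Icc 0 1 := uIcc_of_le zero_le_one
  have cf : ContinuousOn f (uIcc (0:ℝ) 1) := hu ▸ hf
  have cg : ContinuousOn g (uIcc (0:ℝ) 1) := hu ▸ hg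
  have cid : ContinuousOn (fun u : ℝ => u) (uIcc (0:ℝ) 1) := continuousOn_id
  have i1 : IntervalIntegrable (fun u => k1 * (f u * g u)) MeasureTheory.volume 0 1 :=
    (continuousOn_const.mul (cf.mul cg)).intervalIntegrable
  have i2 : IntervalIntegrable (fun u => k2 * (u * f u)) MeasureTheory.volume 0 1 :=
    (continuousOn_const.mul (cid.mul cf)).intervalIntegrable
  have i3 : IntervalIntegrable (fun u => k3 * f u) MeasureTheory.volume 0 1 :=
    (continuousOn_const.mul cf).intervalIntegrable
  have i4 : IntervalIntegrable (fun u => k4 * (u * g u)) MeasureTheory.volume 0 1 :=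
    (continuousOn_const.mul (cid.mul cg)).intervalIntegrable
  have i5 : IntervalIntegrable (fun u => k5 * g u) MeasureTheory.volume 0 1 :=
    (continuousOn_const.mul cg).intervalIntegrable
  have i6 : IntervalIntegrable (fun u : ℝ => k6 * u ^ 2) MeasureTheory.volume 0 1 :=
    (continuous_const.mul (continuous_pow 2)).intervalIntegrable 0 1
  have i7 : IntervalIntegrable (fun u : ℝ => k7 * u) MeasureTheory.volume 0 1 :=
    (continuous_const.mul continuous_id).intervalIntegrable 0 1
  have i8 : IntervalIntegrable (fun _ : ℝ => k8) MeasureTheory.volume 0 1 :=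
    intervalIntegrable_const
  rw [intervalIntegral.integral_add ((((((i1.add i2).add i3).add i4).add i5).add i6).add i7) i8,
    intervalIntegral.integral_add (((((i1.add i2).add i3).add i4).add i5).add i6) i7,
    intervalIntegral.integral_add ((((i1.add i2).add i3).add i4).add i5) i6,
    intervalIntegral.integral_add (((i1.add i2).add i3).add i4) i5,
    intervalIntegral.integral_add ((i1.add i2).add i3) i4,
    intervalIntegral.integral_add (i1.add i2) i3,
    intervalIntegral.integral_add i1 i2,
    intervalIntegral.integral_const_mul, intervalIntegral.integral_const_mul,
    intervalIntegral.integral_const_mul, intervalIntegral.integral_const_mul,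
    intervalIntegral.integral_const_mul, intervalIntegral.integral_const_mul,
    intervalIntegral.integral_const_mul, integral_pow, integral_id,
    intervalIntegral.integral_const]
  norm_num
  ring

variable {a1 a2 c1 d1 c2 d2 : ℝ} {f : ℝ → ℝ}

lemma m0Eq (hf : ContinuousOn f (Icc 0 1))
    (hr : ∀ u ∈ Icc (0:ℝ) 1, f (u / 2) = a1 * f u + (c1 * u + d1) ∧
      f ((u + 1) / 2) = a2 * f u + (c2 * u + d2)) :
    (2 - a1 - a2) * (∫ u in (0:ℝ)..1, f u) = c1 / 2 + d1 + c2 / 2 + d2 := by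
  have hs := split2 f hf
  have e1 : (∫ u in (0:ℝ)..1, f (u / 2))
      = ∫ u in (0:ℝ)..1, (0 * (f u * f u) + 0 * (u * f u) + a1 * f u
          + 0 * (u * f u) + 0 * f u + 0 * u ^ 2 + c1 * u + d1) := by
    apply intervalIntegral.integral_congr
    intro u hu
    rw [uIcc_of_le zero_le_one] at hu
    simp only
    rw [(hr u hu).1]; ring
  have e2 : (∫ u in (0:ℝ)..1, f ((u + 1) / 2))
      = ∫ u in (0:ℝ)..1, (0 * (f u * f u) + 0 * (u * f u) + a2 * f u
          + 0 * (u * f u) + 0 * f u + 0 * u ^ 2 + c2 * u + d2) := by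
    apply intervalIntegral.integral_congr
    intro u hu
    rw [uIcc_of_le zero_le_one] at hu
    simp only
    rw [(hr u hu).2]; ring
  rw [e1, e2, comb f f hf hf, comb f f hf hf] at hs
  linear_combination hs

lemma m1Eq (hf : ContinuousOn f (Icc 0 1))
    (hr : ∀ u ∈ Icc (0:ℝ) 1, f (u / 2) = a1 * f u + (c1 * u + d1) ∧
      f ((u + 1) / 2) = a2 * f u + (c2 * u + d2)) :
    (4 - a1 - a2) * (∫ u in (0:ℝ)..1, u * f u)
      = a2 * (∫ u in (0:ℝ)..1, f u) + (c1 / 3 + d1 / 2 + 5 * c2 / 6 + 3 * d2 / 2) := by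
  have hcont : ContinuousOn (fun u : ℝ => u * f u) (Icc 0 1) :=
    (continuousOn_id.mul hf)
  have hs := split2 (fun u : ℝ => u * f u) hcont
  have e1 : (∫ u in (0:ℝ)..1, (fun u : ℝ => u * f u) (u / 2))
      = ∫ u in (0:ℝ)..1, (0 * (f u * f u) + (a1 / 2) * (u * f u) + 0 * f u
          + 0 * (u * f u) + 0 * f u + (c1 / 2) * u ^ 2 + (d1 / 2) * u + 0) := by
    apply intervalIntegral.integral_congr
    intro u hu
    rw [uIcc_of_le zero_le_one] at hu
    simp only
    rw [(hr u hu).1]; ring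
  have e2 : (∫ u in (0:ℝ)..1, (fun u : ℝ => u * f u) ((u + 1) / 2))
      = ∫ u in (0:ℝ)..1, (0 * (f u * f u) + (a2 / 2) * (u * f u) + (a2 / 2) * f u
          + 0 * (u * f u) + 0 * f u + (c2 / 2) * u ^ 2 + ((c2 + d2) / 2) * u + d2 / 2) := by
    apply intervalIntegral.integral_congr
    intro u hu
    rw [uIcc_of_le zero_le_one] at hu
    simp only
    rw [(hr u hu).2]; ring
  rw [e1, e2, comb f f hf hf, comb f f hf hf] at hs
  linear_combination 2 * hs

lemma prodEq {e1c e1d e2c e2d : ℝ} {g : ℝ → ℝ}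
    (hf : ContinuousOn f (Icc 0 1)) (hg : ContinuousOn g (Icc 0 1))
    (hrf : ∀ u ∈ Icc (0:ℝ) 1, f (u / 2) = a1 * f u + (c1 * u + d1) ∧
      f ((u + 1) / 2) = a2 * f u + (c2 * u + d2))
    (hrg : ∀ u ∈ Icc (0:ℝ) 1, g (u / 2) = a1 * g u + (e1c * u + e1d) ∧
      g ((u + 1) / 2) = a2 * g u + (e2c * u + e2d)) :
    (2 - a1 ^ 2 - a2 ^ 2) * (∫ u in (0:ℝ)..1, f u * g u)
      = a1 * (e1c * (∫ u in (0:ℝ)..1, u * f u) + e1d * (∫ u in (0:ℝ)..1, f u)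
            + c1 * (∫ u in (0:ℝ)..1, u * g u) + d1 * (∫ u in (0:ℝ)..1, g u))
        + a2 * (e2c * (∫ u in (0:ℝ)..1, u * f u) + e2d * (∫ u in (0:ℝ)..1, f u)
            + c2 * (∫ u in (0:ℝ)..1, u * g u) + d2 * (∫ u in (0:ℝ)..1, g u))
        + (c1 * e1c / 3 + (c1 * e1d + e1c * d1) / 2 + d1 * e1d)
        + (c2 * e2c / 3 + (c2 * e2d + e2c * d2) / 2 + d2 * e2d) := by
  have hcont : ContinuousOn (fun u : ℝ => f u * g u) (Icc 0 1) := hf.mul hg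
  have hs := split2 (fun u : ℝ => f u * g u) hcont
  have e1 : (∫ u in (0:ℝ)..1, (fun u : ℝ => f u * g u) (u / 2))
      = ∫ u in (0:ℝ)..1, ((a1 * a1) * (f u * g u) + (a1 * e1c) * (u * f u)
          + (a1 * e1d) * f u + (a1 * c1) * (u * g u) + (a1 * d1) * g u
          + (c1 * e1c) * u ^ 2 + (c1 * e1d + e1c * d1) * u + d1 * e1d) := by
    apply intervalIntegral.integral_congr
    intro u hu
    rw [uIcc_of_le zero_le_one] at hu
    simp only
    rw [(hrf u hu).1, (hrg u hu).1]; ring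
  have e2 : (∫ u in (0:ℝ)..1, (fun u : ℝ => f u * g u) ((u + 1) / 2))
      = ∫ u in (0:ℝ)..1, ((a2 * a2) * (f u * g u) + (a2 * e2c) * (u * f u)
          + (a2 * e2d) * f u + (a2 * c2) * (u * g u) + (a2 * d2) * g u
          + (c2 * e2c) * u ^ 2 + (c2 * e2d + e2c * d2) * u + d2 * e2d) := by
    apply intervalIntegral.integral_congr
    intro u hu
    rw [uIcc_of_le zero_le_one] at hu
    simp only
    rw [(hrf u hu).2, (hrg u hu).2]; ring
  rw [e1, e2, comb f g hf hg, comb f g hf hg] at hs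
  linear_combination hs

end SAFIFAux

set_option maxHeartbeats 2000000 in
open SAFIFAux in
/-- `⟨f̃_{0,1}, f̃_{1,1}⟩ = 0` iff `r₁` equals the stated formula, and
`⟨f̃_{1,1}, f̃_{2,1}⟩ = 0` iff `s₁` equals the stated formula. -/
theorem stmt16 (α₁ α₂ β₁ β₂ γ₁ γ₂ r₁ s₁ : ℝ)
    (hα₁ : |α₁| < 1) (hα₂ : |α₂| < 1) (hγ₁ : |γ₁| < 1) (hγ₂ : |γ₂| < 1)
    (hβγ₁ : |β₁| + |γ₁| < 1) (hβγ₂ : |β₂| + |γ₂| < 1)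
    (f0 f1 f2 : ℝ → ℝ)
    (hf0 : IsSAFIF2 α₁ α₂ f0 1 r₁ 0)
    (hf1 : IsSAFIF2 α₁ α₂ f1 0 1 0)
    (hf2 : IsSAFIF2 α₁ α₂ f2 0 s₁ 1) :
    ((∫ u in (0:ℝ)..1, f0 u * f1 u) = 0 ↔
      r₁ = (4 - 4 * α₁ ^ 2 - 6 * α₂ - 2 * α₁ * α₂ + 3 * α₁ ^ 2 * α₂ -
              4 * α₂ ^ 2 + 3 * α₂ ^ 3) /
            (4 * (-4 + α₁ ^ 2 - α₁ * α₂ + α₂ ^ 2))) ∧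
    ((∫ u in (0:ℝ)..1, f1 u * f2 u) = 0 ↔
      s₁ = (4 - 6 * α₁ - 4 * α₁ ^ 2 + 3 * α₁ ^ 3 - 2 * α₁ * α₂ -
              4 * α₂ ^ 2 + 3 * α₁ * α₂ ^ 2) /
            (4 * (-4 + α₁ ^ 2 - α₁ * α₂ + α₂ ^ 2))) := by
  obtain ⟨ha1l, ha1r⟩ := abs_lt.mp hα₁
  obtain ⟨ha2l, ha2r⟩ := abs_lt.mp hα₂
  have hsq1 : α₁ ^ 2 < 1 := by nlinarith
  have hsq2 : α₂ ^ 2 < 1 := by nlinarith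
  have hKpos : (0:ℝ) < 3 * (2 - α₁ - α₂) * (4 - α₁ - α₂) * (2 - α₁ ^ 2 - α₂ ^ 2) := by
    have h1 : (0:ℝ) < 2 - α₁ - α₂ := by linarith
    have h2 : (0:ℝ) < 4 - α₁ - α₂ := by linarith
    have h3 : (0:ℝ) < 2 - α₁ ^ 2 - α₂ ^ 2 := by linarith
    positivity
  have hK : (3 * (2 - α₁ - α₂) * (4 - α₁ - α₂) * (2 - α₁ ^ 2 - α₂ ^ 2)) ≠ 0 := ne_of_gt hKpos
  have hRd : (4 * (-4 + α₁ ^ 2 - α₁ * α₂ + α₂ ^ 2)) ≠ 0 := by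
    have : 4 * (-4 + α₁ ^ 2 - α₁ * α₂ + α₂ ^ 2) < 0 := by
      nlinarith [sq_nonneg (α₁ + α₂)]
    exact ne_of_lt this
  obtain ⟨cont0, ⟨c01, d01, c02, d02, hr0⟩, h00, h0h, h01⟩ := hf0
  obtain ⟨cont1, ⟨c11, d11, c12, d12, hr1⟩, h10, h1h, h11⟩ := hf1
  obtain ⟨cont2, ⟨c21, d21, c22, d22, hr2⟩, h20, h2h, h21⟩ := hf2
  have m0 : (0:ℝ) ∈ Icc (0:ℝ) 1 := by norm_num
  have m1 : (1:ℝ) ∈ Icc (0:ℝ) 1 := by norm_num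
  have ha0 := hr0 0 m0
  have hb0 := hr0 1 m1
  have ha1 := hr1 0 m0
  have hb1 := hr1 1 m1
  have ha2 := hr2 0 m0
  have hb2 := hr2 1 m1
  norm_num [h00, h0h, h01] at ha0 hb0
  norm_num [h10, h1h, h11] at ha1 hb1
  norm_num [h20, h2h, h21] at ha2 hb2
  -- pin the affine constants
  have hd01 : d01 = 1 - α₁ := by linarith [ha0.1]
  have hc01 : c01 = r₁ - 1 + α₁ := by linarith [hb0.1]
  have hd02 : d02 = r₁ - α₂ := by linarith [ha0.2]
  have hc02 : c02 = α₂ - r₁ := by linarith [hb0.2]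
  have hd11 : d11 = 0 := by linarith [ha1.1]
  have hc11 : c11 = 1 := by linarith [hb1.1]
  have hd12 : d12 = 1 := by linarith [ha1.2]
  have hc12 : c12 = -1 := by linarith [hb1.2]
  have hd21 : d21 = 0 := by linarith [ha2.1]
  have hc21 : c21 = s₁ - α₁ := by linarith [hb2.1]
  have hd22 : d22 = s₁ := by linarith [ha2.2]
  have hc22 : c22 = 1 - α₂ - s₁ := by linarith [hb2.2]
  -- moment and product equations
  have hm00 := m0Eq cont0 hr0
  have hm10 := m1Eq cont0 hr0
  have hm01 := m0Eq cont1 hr1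
  have hm11 := m1Eq cont1 hr1
  have hm02 := m0Eq cont2 hr2
  have hm12 := m1Eq cont2 hr2
  have hP01 := prodEq cont0 cont1 hr0 hr1
  have hP12 := prodEq cont1 cont2 hr1 hr2
  rw [hd01, hc01, hd02, hc02] at hm00 hm10 hP01
  rw [hd11, hc11, hd12, hc12] at hm01 hm11 hP01 hP12
  rw [hd21, hc21, hd22, hc22] at hm02 hm12 hP12
  -- the key division-free identities
  have key1 : (3 * (2 - α₁ - α₂) * (4 - α₁ - α₂) * (2 - α₁ ^ 2 - α₂ ^ 2))
      * (∫ u in (0:ℝ)..1, f0 u * f1 u)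
      = (4 - 4 * α₁ ^ 2 - 6 * α₂ - 2 * α₁ * α₂ + 3 * α₁ ^ 2 * α₂ -
          4 * α₂ ^ 2 + 3 * α₂ ^ 3)
        - (4 * (-4 + α₁ ^ 2 - α₁ * α₂ + α₂ ^ 2)) * r₁ := by
    linear_combination (3 * (2 - α₁ - α₂) * (4 - α₁ - α₂)) * hP01
      + (3 * (2 - α₁ - α₂) * (α₁ - α₂)) * hm10
      + (3 * ((4 - α₁ - α₂) * α₂ + α₂ * (α₁ - α₂))) * hm00
      + (3 * (2 - α₁ - α₂) * (α₁ * (r₁ - 1 + α₁) + α₂ * (α₂ - r₁))) * hm11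
      + (3 * ((4 - α₁ - α₂) * (α₁ * (1 - α₁) + α₂ * (r₁ - α₂))
          + α₂ * (α₁ * (r₁ - 1 + α₁) + α₂ * (α₂ - r₁)))) * hm01
  have key2 : (3 * (2 - α₁ - α₂) * (4 - α₁ - α₂) * (2 - α₁ ^ 2 - α₂ ^ 2))
      * (∫ u in (0:ℝ)..1, f1 u * f2 u)
      = (4 - 6 * α₁ - 4 * α₁ ^ 2 + 3 * α₁ ^ 3 - 2 * α₁ * α₂ -
          4 * α₂ ^ 2 + 3 * α₁ * α₂ ^ 2)
        - (4 * (-4 + α₁ ^ 2 - α₁ * α₂ + α₂ ^ 2)) * s₁ := by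
    linear_combination (3 * (2 - α₁ - α₂) * (4 - α₁ - α₂)) * hP12
      + (3 * (2 - α₁ - α₂) * (α₁ * (s₁ - α₁) + α₂ * (1 - α₂ - s₁))) * hm11
      + (3 * ((4 - α₁ - α₂) * (α₂ * s₁)
          + α₂ * (α₁ * (s₁ - α₁) + α₂ * (1 - α₂ - s₁)))) * hm01
      + (3 * (2 - α₁ - α₂) * (α₁ - α₂)) * hm12
      + (3 * ((4 - α₁ - α₂) * α₂ + α₂ * (α₁ - α₂))) * hm02
  -- nonvanishing facts
  -- nonvanishing facts moved earlier
  constructor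
  · constructor
    · intro h
      rw [eq_div_iff hRd]
      linear_combination key1
        - (3 * (2 - α₁ - α₂) * (4 - α₁ - α₂) * (2 - α₁ ^ 2 - α₂ ^ 2)) * h
    · intro h
      have hz : (3 * (2 - α₁ - α₂) * (4 - α₁ - α₂) * (2 - α₁ ^ 2 - α₂ ^ 2))
          * (∫ u in (0:ℝ)..1, f0 u * f1 u) = 0 := by
        rw [key1, h]
        field_simp
        rw [div_self (right_ne_zero_of_mul hRd)]; ring
      rcases mul_eq_zero.mp hz with h' | h'
      · exact absurd h' hK
      · exact h'
  · constructor
    · intro h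
      rw [eq_div_iff hRd]
      linear_combination key2
        - (3 * (2 - α₁ - α₂) * (4 - α₁ - α₂) * (2 - α₁ ^ 2 - α₂ ^ 2)) * h
    · intro h
      have hz : (3 * (2 - α₁ - α₂) * (4 - α₁ - α₂) * (2 - α₁ ^ 2 - α₂ ^ 2))
          * (∫ u in (0:ℝ)..1, f1 u * f2 u) = 0 := by
        rw [key2, h]
        field_simp
        rw [div_self (right_ne_zero_of_mul hRd)]; ring
      rcases mul_eq_zero.mp hz with h' | h'
      · exact absurd h' hK
      · exact h'
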